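/- Crossed-product central sequences: Fix crossed-product data (N, τ, G, g ↦ u_g, M, (β_g)) as in the context. Assume additionally that for every g ≠ e and every norm-bounded sequence (y_n) in M with ‖y_n·(u_g m u_g*) − m·y_n‖₂ → 0 for all m ∈ M one has ‖y_n‖₂ → 0 (this encodes that no ψ_g = Ad(u_g), g ≠ e, is approximately inner on M). Then: (i) for every norm-bounded sequence (b_n) in N with ‖b_n x − x b_n‖₂ → 0 for all x ∈ N, setting c_n := |G|⁻¹ · Σ_{g∈G} u_g·β_e(b_n)·u_g*, one has c_n ∈ M, u_g c_n u_g* = c_n for all g ∈ G, and ‖b_n − c_n‖₂ → 0; (ii) conversely, every norm-bounded sequence (a_n) in M with u_g a_n u_g* = a_n for all g ∈ G and ‖a_n m − m a_n‖₂ → 0 for all m ∈ M satisfies ‖a_n x − x a_n‖₂ → 0 for all x ∈ N. (Together: the central sequence algebra of M ⋊ G equals the G-fixed part of the central sequence algebra of M.) -/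

import Mathlib

open Filter Topology

set_option maxHeartbeats 2000000 in
/-- Central sequences of a crossed product `N = M ⋊ G` by a nowhere approximately inner
outer action: (i) every bounded central sequence of `N` is asymptotically equal to its
`G`-averaged `M`-Fourier coefficient at the identity, which lies in `M` and is fixed by
every `Ad (u g)`; (ii) conversely every bounded `G`-fixed sequence in `M` which is central
for `M` is central for `N`. -/
theorem crossedProduct_central_sequences
    {N : Type*} [NormedRing N] [StarRing N] [CStarRing N] [CompleteSpace N]
    [NormedAlgebra ℂ N] [StarModule ℂ N]
    (τ : N →ₗ[ℂ] ℂ) (hτ1 : τ 1 = 1)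
    (hτpos : ∀ x : N, 0 ≤ (τ (star x * x)).re ∧ (τ (star x * x)).im = 0)
    (hτtr : ∀ x y : N, τ (x * y) = τ (y * x))
    (hτfaith : ∀ x : N, τ (star x * x) = 0 → x = 0)
    (n2 : N → ℝ) (hn2 : ∀ x, n2 x = Real.sqrt ((τ (star x * x)).re))
    {G : Type*} [Group G] [Fintype G]
    (u : G →* N) (hu : ∀ g, star (u g) * u g = 1 ∧ u g * star (u g) = 1)
    (M : StarSubalgebra ℂ N)
    (hMinv : ∀ g : G, ∀ m ∈ M, u g * m * star (u g) ∈ M)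
    (β : G → N →ₗ[ℂ] N)
    (hβmem : ∀ g b, β g b ∈ M)
    (hβnorm : ∀ g b, ‖β g b‖ ≤ ‖b‖)
    (hβsum : ∀ b : N, b = ∑ g : G, β g b * u g)
    (hτM : ∀ g : G, g ≠ 1 → ∀ m ∈ M, τ (m * u g) = 0)
    -- no `Ad (u g)`, `g ≠ e`, is approximately inner on `M`:
    (houter : ∀ g : G, g ≠ 1 → ∀ y : ℕ → N, (∀ n, y n ∈ M) →
      (∃ C : ℝ, ∀ n, ‖y n‖ ≤ C) →
      (∀ m ∈ M, Tendsto (fun n => n2 (y n * (u g * m * star (u g)) - m * y n))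
        atTop (nhds 0)) →
      Tendsto (fun n => n2 (y n)) atTop (nhds 0)) :
    -- (i)
    (∀ b : ℕ → N, (∃ C : ℝ, ∀ n, ‖b n‖ ≤ C) →
      (∀ x : N, Tendsto (fun n => n2 (b n * x - x * b n)) atTop (nhds 0)) →
      ∀ c : ℕ → N,
        (∀ n, c n = ((Fintype.card G : ℂ))⁻¹ •
          ∑ g : G, u g * β 1 (b n) * star (u g)) →
        (∀ n, c n ∈ M) ∧
        (∀ n, ∀ g : G, u g * c n * star (u g) = c n) ∧
        Tendsto (fun n => n2 (b n - c n)) atTop (nhds 0))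
    ∧
    -- (ii)
    (∀ a : ℕ → N, (∃ C : ℝ, ∀ n, ‖a n‖ ≤ C) → (∀ n, a n ∈ M) →
      (∀ n, ∀ g : G, u g * a n * star (u g) = a n) →
      (∀ m ∈ M, Tendsto (fun n => n2 (a n * m - m * a n)) atTop (nhds 0)) →
      ∀ x : N, Tendsto (fun n => n2 (a n * x - x * a n)) atTop (nhds 0)) := by
  classical
  have hustar : ∀ g : G, star (u g) = u g⁻¹ := by
    intro g
    have h1 : u g⁻¹ * u g = 1 := by rw [← map_mul, inv_mul_cancel, map_one]
    calc star (u g) = 1 * star (u g) := (one_mul _).symm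
      _ = u g⁻¹ * (u g * star (u g)) := by rw [← mul_assoc, h1]
      _ = u g⁻¹ := by rw [(hu g).2, mul_one]
  have hn2nonneg : ∀ x, 0 ≤ n2 x := fun x => (hn2 x) ▸ Real.sqrt_nonneg _
  have hn2sq : ∀ x, n2 x ^ 2 = (τ (star x * x)).re := fun x => by
    rw [hn2, Real.sq_sqrt (hτpos x).1]
  -- quadratic expansion
  have hexp : ∀ (s : ℝ) (x y : N),
      (τ (star ((s:ℂ) • x + y) * ((s:ℂ) • x + y))).re
      = (τ (star x * x)).re * (s * s)
        + ((τ (star x * y)).re + (τ (star y * x)).re) * s + (τ (star y * y)).re := by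
    intro s x y
    have : star ((s:ℂ) • x + y) * ((s:ℂ) • x + y)
        = ((s:ℂ) * (s:ℂ)) • (star x * x) + (s:ℂ) • (star x * y)
          + (s:ℂ) • (star y * x) + star y * y := by
      simp only [star_add, star_smul, Complex.star_def, Complex.conj_ofReal, add_mul, mul_add,
        smul_mul_assoc, mul_smul_comm, smul_smul, smul_add]
      abel
    rw [this]
    simp [map_add, map_smul, Complex.add_re, Complex.ofReal_mul]
    ring
  have htri : ∀ x y : N, n2 (x + y) ≤ n2 x + n2 y := by
    intro x y
    set a := (τ (star x * x)).re with ha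
    set c := (τ (star y * y)).re with hc
    set r := (τ (star x * y)).re + (τ (star y * x)).re with hr
    have ha0 : 0 ≤ a := (hτpos x).1
    have hc0 : 0 ≤ c := (hτpos y).1
    have hq : ∀ s : ℝ, 0 ≤ a * (s * s) + r * s + c := by
      intro s
      have h := (hτpos ((s:ℂ) • x + y)).1
      rw [hexp s x y] at h
      rw [ha, hc, hr]
      linarith
    have hd := discrim_le_zero hq
    rw [discrim] at hd
    have hrle : r ≤ 2 * Real.sqrt a * Real.sqrt c := by
      have h1 : r ≤ |r| := le_abs_self r
      have h2 : |r| = Real.sqrt (r^2) := (Real.sqrt_sq_eq_abs r).symm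
      have h3 : r^2 ≤ 4 * a * c := by nlinarith
      have h4 : Real.sqrt (r^2) ≤ Real.sqrt (4*a*c) := Real.sqrt_le_sqrt h3
      have h5 : Real.sqrt (4*a*c) = 2 * Real.sqrt a * Real.sqrt c := by
        rw [show (4:ℝ)*a*c = (2*Real.sqrt a*Real.sqrt c)^2 by
          rw [mul_pow, mul_pow, Real.sq_sqrt ha0, Real.sq_sqrt hc0]; ring]
        rw [Real.sqrt_sq (by positivity)]
      linarith
    have hsum : (τ (star (x+y) * (x+y))).re = a + r + c := by
      have := hexp 1 x y
      simpa using this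
    rw [hn2, hn2, hn2, hsum, ← ha, ← hc]
    have : a + r + c ≤ (Real.sqrt a + Real.sqrt c)^2 := by
      have := Real.sq_sqrt ha0
      have := Real.sq_sqrt hc0
      nlinarith [Real.sqrt_nonneg a, Real.sqrt_nonneg c]
    calc Real.sqrt (a + r + c) ≤ Real.sqrt ((Real.sqrt a + Real.sqrt c)^2) :=
          Real.sqrt_le_sqrt this
      _ = Real.sqrt a + Real.sqrt c := Real.sqrt_sq (by positivity)
  -- misc n2 lemmas
  have hn2zero : n2 0 = 0 := by
    rw [hn2]; simp
  have hn2smul : ∀ (k : ℂ) (x : N), n2 (k • x) = ‖k‖ * n2 x := by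
    intro k x
    have : star (k • x) * (k • x) = (starRingEnd ℂ k * k) • (star x * x) := by
      rw [star_smul, smul_mul_assoc, mul_smul_comm, smul_smul]; rfl
    rw [hn2, hn2, this, map_smul, smul_eq_mul, Complex.conj_mul']
    rw [show ((‖k‖:ℂ)^2 * τ (star x * x)).re = ‖k‖^2 * (τ (star x * x)).re by
      rw [← Complex.ofReal_pow, Complex.re_ofReal_mul]]
    rw [Real.sqrt_mul (by positivity), Real.sqrt_sq (by positivity)]
  have hn2sum : ∀ (s : Finset G) (f : G → N), n2 (∑ g ∈ s, f g) ≤ ∑ g ∈ s, n2 (f g) := by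
    intro s f
    induction s using Finset.cons_induction with
    | empty => simp [hn2zero]
    | cons g s hg ih =>
      rw [Finset.sum_cons, Finset.sum_cons]
      exact le_trans (htri _ _) (by linarith)
  have hn2ur : ∀ (x : N) (g : G), n2 (x * u g) = n2 x := by
    intro x g
    rw [hn2, hn2]
    congr 2
    have h1 : star (x * u g) * (x * u g) = star (u g) * (star x * x) * u g := by
      rw [star_mul]; simp only [mul_assoc]
    rw [h1, hτtr (star (u g) * (star x * x)) (u g), ← mul_assoc, (hu g).2, one_mul]
  have hn2ul : ∀ (x : N) (g : G), n2 (u g * x) = n2 x := by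
    intro x g
    rw [hn2, hn2]
    congr 2
    have h1 : star (u g * x) * (u g * x) = star x * (star (u g) * u g) * x := by
      rw [star_mul]; simp only [mul_assoc]
    rw [h1, (hu g).1, mul_one]

  have hcard : (Fintype.card G : ℂ) ≠ 0 := by
    exact_mod_cast Nat.cast_ne_zero.mpr Fintype.card_ne_zero
  -- orthogonality
  have hterm : ∀ (p q : N) (g h : G), τ (star (p * u g) * (q * u h)) = τ ((star p * q) * u (h * g⁻¹)) := by
    intro p q g h
    have h1 : star (p * u g) * (q * u h) = star (u g) * ((star p * q) * u h) := by
      rw [star_mul]; simp only [mul_assoc]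
    rw [h1, hτtr, mul_assoc, hustar g, ← map_mul]
  have horth : ∀ (m : G → N), (∀ g, m g ∈ M) →
      τ (star (∑ g : G, m g * u g) * ∑ g : G, m g * u g) = ∑ g : G, τ (star (m g) * m g) := by
    intro m hm
    rw [star_sum, Finset.sum_mul_sum, map_sum]
    refine Finset.sum_congr rfl (fun g _ => ?_)
    rw [map_sum, Finset.sum_eq_single_of_mem g (Finset.mem_univ g)]
    · rw [hterm _ _ g g, mul_inv_cancel, map_one, mul_one]
    · intro h _ hne
      rw [hterm _ _ g h]
      exact hτM _ (by simp [mul_inv_eq_one, hne]) _ (mul_mem (star_mem (hm g)) (hm h))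
  -- uniqueness of Fourier coefficients
  have huniq : ∀ (m : G → N), (∀ g, m g ∈ M) → ∀ b : N, (∑ g : G, m g * u g) = b →
      ∀ g, m g = β g b := by
    intro m hm b hb g
    have hd : ∀ h, m h - β h b ∈ M := fun h => sub_mem (hm h) (hβmem h b)
    have hsum0 : (∑ h : G, (m h - β h b) * u h) = 0 := by
      simp only [sub_mul, Finset.sum_sub_distrib]
      rw [hb, ← hβsum b, sub_self]
    have h0 : (∑ h : G, τ (star (m h - β h b) * (m h - β h b))) = 0 := by
      rw [← horth _ hd, hsum0]; simp
    have h0re := congrArg Complex.re h0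
    rw [Complex.re_sum] at h0re
    have h0g : (τ (star (m g - β g b) * (m g - β g b))).re = 0 :=
      (Finset.sum_eq_zero_iff_of_nonneg (fun i _ => (hτpos _).1)).mp h0re
        g (Finset.mem_univ g)
    have : m g - β g b = 0 :=
      hτfaith _ (Complex.ext (by simpa using h0g) (by simpa using (hτpos (m g - β g b)).2))
    exact sub_eq_zero.mp this
  -- Fourier coefficient identities
  have hβml : ∀ (m : N), m ∈ M → ∀ (b : N) (g : G), β g (m * b) = m * β g b := by
    intro m hm b g
    refine (huniq (fun h => m * β h b) (fun h => mul_mem hm (hβmem h b)) (m * b) ?_ g).symm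
    calc ∑ h : G, m * β h b * u h = m * ∑ h : G, β h b * u h := by
          rw [Finset.mul_sum]; simp only [mul_assoc]
      _ = m * b := by rw [← hβsum b]
  have hβmr : ∀ (m : N), m ∈ M → ∀ (b : N) (g : G),
      β g (b * m) = β g b * (u g * m * star (u g)) := by
    intro m hm b g
    refine (huniq (fun h => β h b * (u h * m * star (u h)))
      (fun h => mul_mem (hβmem h b) (hMinv h m hm)) (b * m) ?_ g).symm
    calc ∑ h : G, β h b * (u h * m * star (u h)) * u h
        = ∑ h : G, β h b * u h * m := by
          refine Finset.sum_congr rfl fun h _ => ?_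
          simp only [mul_assoc, (hu h).1, mul_one]
      _ = b * m := by rw [← Finset.sum_mul, ← hβsum b]
  have hβur : ∀ (b : N) (k g : G), β g (b * u k) = β (g * k⁻¹) b := by
    intro b k g
    refine (huniq (fun h => β (h * k⁻¹) b) (fun h => hβmem _ b) (b * u k) ?_ g).symm
    calc ∑ h : G, β (h * k⁻¹) b * u h
        = ∑ j : G, β j b * u (j * k) := by
          refine (Fintype.sum_equiv (Equiv.mulRight k) _ _ fun j => ?_).symm
          simp [mul_inv_cancel_right]
      _ = (∑ j : G, β j b * u j) * u k := by
          rw [Finset.sum_mul]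
          refine Finset.sum_congr rfl fun j _ => ?_
          rw [map_mul, mul_assoc]
      _ = b * u k := by rw [← hβsum b]
  have hβul : ∀ (b : N) (k g : G), β g (u k * b) = u k * β (k⁻¹ * g) b * star (u k) := by
    intro b k g
    refine (huniq (fun h => u k * β (k⁻¹ * h) b * star (u k))
      (fun h => hMinv k _ (hβmem _ b)) (u k * b) ?_ g).symm
    calc ∑ h : G, u k * β (k⁻¹ * h) b * star (u k) * u h
        = ∑ h : G, u k * (β (k⁻¹ * h) b * u (k⁻¹ * h)) := by
          refine Finset.sum_congr rfl fun h _ => ?_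
          rw [hustar k]
          simp only [mul_assoc, ← map_mul]
      _ = u k * ∑ j : G, β j b * u j := by
          rw [Finset.mul_sum]
          refine (Fintype.sum_equiv (Equiv.mulLeft k) _ _ fun j => ?_).symm
          simp
      _ = u k * b := by rw [← hβsum b]
  have hβn2 : ∀ (g : G) (b : N), n2 (β g b) ≤ n2 b := by
    intro g b
    have h1 : τ (star b * b) = ∑ h : G, τ (star (β h b) * β h b) := by
      conv_lhs => rw [hβsum b]
      exact horth _ (fun h => hβmem h b)
    have h2 : (τ (star (β g b) * β g b)).re ≤ (τ (star b * b)).re := by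
      rw [h1, Complex.re_sum]
      exact Finset.single_le_sum (f := fun i => (τ (star (β i b) * β i b)).re)
        (fun i _ => (hτpos _).1) (Finset.mem_univ g)
    rw [hn2, hn2]; exact Real.sqrt_le_sqrt h2
  constructor
  · -- part (i)
    rintro b ⟨C, hC⟩ hcent c hc
    have hmemc : ∀ n, c n ∈ M := by
      intro n; rw [hc n]
      exact M.smul_mem (sum_mem (fun g _ => hMinv g _ (hβmem 1 (b n)))) _
    have hfix : ∀ (n : ℕ) (g : G), u g * c n * star (u g) = c n := by
      intro n g
      rw [hc n, mul_smul_comm, smul_mul_assoc, Finset.mul_sum, Finset.sum_mul]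
      congr 1
      refine Fintype.sum_equiv (Equiv.mulLeft g) _ _ fun h => ?_
      simp only [Equiv.coe_mulLeft, map_mul, star_mul]
      simp only [mul_assoc]
    refine ⟨hmemc, hfix, ?_⟩
    have hsplit : ∀ n, b n - β 1 (b n) = ∑ g ∈ Finset.univ.erase 1, β g (b n) * u g := by
      intro n
      have h := hβsum (b n)
      rw [← Finset.sum_erase_add _ _ (Finset.mem_univ (1 : G)), map_one, mul_one] at h
      rw [sub_eq_iff_eq_add]; exact h
    have hT1 : ∀ g : G, g ≠ 1 → Tendsto (fun n => n2 (β g (b n))) atTop (𝓝 0) := by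
      intro g hg
      refine houter g hg _ (fun n => hβmem g (b n))
        ⟨C, fun n => le_trans (hβnorm g (b n)) (hC n)⟩ ?_
      intro m hm
      refine squeeze_zero (fun n => hn2nonneg _) (fun n => ?_) (hcent m)
      have key : β g (b n) * (u g * m * star (u g)) - m * β g (b n)
          = β g (b n * m - m * b n) := by
        rw [map_sub, hβmr m hm (b n) g, hβml m hm (b n) g]
      rw [key]; exact hβn2 g _
    have hdiff : ∀ g : G,
        Tendsto (fun n => n2 (β 1 (b n) - u g * β 1 (b n) * star (u g))) atTop (𝓝 0) := by
      intro g
      refine squeeze_zero (fun n => hn2nonneg _) (fun n => ?_) (hcent (u g))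
      have key : β 1 (b n) - u g * β 1 (b n) * star (u g)
          = β g (b n * u g - u g * b n) := by
        rw [map_sub, hβur (b n) g g, hβul (b n) g g, mul_inv_cancel, inv_mul_cancel]
      rw [key]; exact hβn2 g _
    have hT2 : Tendsto (fun n => n2 (β 1 (b n) - c n)) atTop (𝓝 0) := by
      have hrep : ∀ n, β 1 (b n) - c n
          = ((Fintype.card G : ℂ))⁻¹ •
              ∑ g : G, (β 1 (b n) - u g * β 1 (b n) * star (u g)) := by
        intro n
        rw [Finset.sum_sub_distrib, smul_sub, hc n]
        congr 1
        rw [Finset.sum_const, Finset.card_univ, ← Nat.cast_smul_eq_nsmul ℂ, smul_smul,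
          inv_mul_cancel₀ hcard, one_smul]
      have hb2 : Tendsto (fun n => ‖((Fintype.card G : ℂ))⁻¹‖ *
          ∑ g : G, n2 (β 1 (b n) - u g * β 1 (b n) * star (u g))) atTop (𝓝 0) := by
        have := (tendsto_finset_sum Finset.univ (fun g _ => hdiff g)).const_mul
          (‖((Fintype.card G : ℂ))⁻¹‖)
        simpa using this
      refine squeeze_zero (fun n => hn2nonneg _) (fun n => ?_) hb2
      rw [hrep n, hn2smul]
      exact mul_le_mul_of_nonneg_left (hn2sum _ _) (by positivity)
    have hbound : ∀ n, n2 (b n - c n) ≤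
        (∑ g ∈ Finset.univ.erase 1, n2 (β g (b n))) + n2 (β 1 (b n) - c n) := by
      intro n
      have h1 : b n - c n = (b n - β 1 (b n)) + (β 1 (b n) - c n) := by abel
      rw [h1]
      refine le_trans (htri _ _) (add_le_add ?_ le_rfl)
      rw [hsplit n]
      refine le_trans (hn2sum _ _) (le_of_eq ?_)
      exact Finset.sum_congr rfl fun g _ => hn2ur _ g
    refine squeeze_zero (fun n => hn2nonneg _) hbound ?_
    have := Tendsto.add
      (tendsto_finset_sum (Finset.univ.erase 1)
        (fun g hg => hT1 g (Finset.ne_of_mem_erase hg))) hT2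
    simpa using this
  · -- part (ii)
    rintro a ⟨C, hC⟩ hmem hfixa hmcent x
    have hcomm : ∀ (n : ℕ) (g : G), u g * a n = a n * u g := by
      intro n g
      calc u g * a n = u g * a n * (star (u g) * u g) := by rw [(hu g).1, mul_one]
        _ = (u g * a n * star (u g)) * u g := by simp only [mul_assoc]
        _ = a n * u g := by rw [hfixa n g]
    have hrep : ∀ n, a n * x - x * a n
        = ∑ g : G, (a n * β g x - β g x * a n) * u g := by
      intro n
      have hterm2 : ∀ g : G, (a n * β g x - β g x * a n) * u g
          = a n * (β g x * u g) - (β g x * u g) * a n := by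
        intro g
        rw [sub_mul]; simp only [mul_assoc, hcomm n g]
      rw [Finset.sum_congr rfl (fun g _ => hterm2 g), Finset.sum_sub_distrib,
        ← Finset.mul_sum, ← Finset.sum_mul, ← hβsum x]
    have hTsum : Tendsto (fun n => ∑ g : G, n2 (a n * β g x - β g x * a n)) atTop (𝓝 0) := by
      have := tendsto_finset_sum Finset.univ (fun (g : G) _ => hmcent (β g x) (hβmem g x))
      simpa using this
    refine squeeze_zero (fun n => hn2nonneg _) (fun n => ?_) hTsum
    rw [hrep n]
    refine le_trans (hn2sum _ _) (le_of_eq ?_)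
    exact Finset.sum_congr rfl fun g _ => hn2ur _ g
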